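/- The 1-form Ω = (x dy − y dx)/(x⁴ + y⁴) on ℂ² has simple poles along its (reduced) polar divisor x⁴ + y⁴ = 0 and dΩ also has simple poles there (Ω is logarithmic), but its pullback under the blow-up chart σ(x,t) = (x, tx) equals dt/(x²(1 + t⁴)), which has a pole of order exactly 2 along the exceptional divisor x = 0. -/

import Mathlib

set_option synthInstance.maxHeartbeats 1000000 in
set_option maxHeartbeats 1000000 in
open Polynomial in
lemma sq_aux : Squarefree (MvPolynomial.X 0 ^ 4 + MvPolynomial.X 1 ^ 4 : MvPolynomial (Fin 2) ℂ) := by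
  have hinj : Function.Injective
      (algebraMap (MvPolynomial (Fin 1) ℂ) (FractionRing (MvPolynomial (Fin 1) ℂ))) :=
    IsFractionRing.injective _ _
  set e := MvPolynomial.finSuccEquiv ℂ 1 with he_def
  have he : e (MvPolynomial.X 0 ^ 4 + MvPolynomial.X 1 ^ 4) =
      X ^ 4 + C ((MvPolynomial.X 0 : MvPolynomial (Fin 1) ℂ) ^ 4) := by
    have h1 : (1 : Fin 2) = Fin.succ 0 := rfl
    rw [map_add, map_pow, map_pow, h1, MvPolynomial.finSuccEquiv_X_zero,
      MvPolynomial.finSuccEquiv_X_succ, ← map_pow]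
  have hX4 : ((MvPolynomial.X 0 : MvPolynomial (Fin 1) ℂ) ^ 4) ≠ 0 :=
    pow_ne_zero _ (MvPolynomial.X_ne_zero 0)
  have hc : algebraMap (MvPolynomial (Fin 1) ℂ) (FractionRing (MvPolynomial (Fin 1) ℂ))
      ((MvPolynomial.X 0 : MvPolynomial (Fin 1) ℂ) ^ 4) ≠ 0 := by
    intro h
    exact hX4 (hinj (by simpa using h))
  have hsep : ((X : (FractionRing (MvPolynomial (Fin 1) ℂ))[X]) ^ 4 +
      C (algebraMap _ _ ((MvPolynomial.X 0 : MvPolynomial (Fin 1) ℂ) ^ 4))).Separable := by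
    have h4 : ((4 : ℕ) : FractionRing (MvPolynomial (Fin 1) ℂ)) ≠ 0 := by
      intro h
      have h' : algebraMap (MvPolynomial (Fin 1) ℂ) (FractionRing (MvPolynomial (Fin 1) ℂ))
          ((4 : ℕ) : MvPolynomial (Fin 1) ℂ) = algebraMap _ _ 0 := by
        rw [map_natCast, map_zero]; exact h
      have := hinj h'
      norm_num at this
    have := Polynomial.separable_X_pow_sub_C (F := FractionRing (MvPolynomial (Fin 1) ℂ))
      (-(algebraMap _ _ ((MvPolynomial.X 0 : MvPolynomial (Fin 1) ℂ) ^ 4))) h4 (by simpa using hc)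
    simpa [sub_neg_eq_add] using this
  have hK := hsep.squarefree
  have hR : Squarefree ((X : (MvPolynomial (Fin 1) ℂ)[X]) ^ 4 +
      C ((MvPolynomial.X 0 : MvPolynomial (Fin 1) ℂ) ^ 4)) := by
    intro q hq
    have hmap : (Polynomial.map (algebraMap _ _) q) * (Polynomial.map (algebraMap _ _) q) ∣
        (X : (FractionRing (MvPolynomial (Fin 1) ℂ))[X]) ^ 4 +
          C (algebraMap _ _ ((MvPolynomial.X 0 : MvPolynomial (Fin 1) ℂ) ^ 4)) := by
      have := Polynomial.map_dvd (algebraMap (MvPolynomial (Fin 1) ℂ)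
        (FractionRing (MvPolynomial (Fin 1) ℂ))) hq
      simpa [Polynomial.map_mul, Polynomial.map_add, Polynomial.map_pow] using this
    have hu : IsUnit (Polynomial.map (algebraMap _ _) q) := hK _ hmap
    have hdeg : q.natDegree = 0 := by
      have := Polynomial.natDegree_eq_zero_of_isUnit hu
      rwa [Polynomial.natDegree_map_eq_of_injective hinj] at this
    obtain ⟨a, rfl⟩ := Polynomial.natDegree_eq_zero.mp hdeg
    rw [← map_mul, Polynomial.C_dvd_iff_dvd_coeff] at hq
    have h4 : (a * a) ∣ (1 : MvPolynomial (Fin 1) ℂ) := by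
      simpa [← map_pow, Polynomial.coeff_C] using hq 4
    exact (isUnit_of_mul_isUnit_left (isUnit_of_dvd_one h4)).map Polynomial.C
  intro q hq
  have hd : (e q) * (e q) ∣ X ^ 4 + C ((MvPolynomial.X 0 : MvPolynomial (Fin 1) ℂ) ^ 4) := by
    rw [← he, ← map_mul]
    exact map_dvd (e : MvPolynomial (Fin (1 + 1)) ℂ →+* (MvPolynomial (Fin 1) ℂ)[X]) hq
  have hu := (hR _ hd).map e.symm.toRingEquiv.toRingHom
  simpa using hu

/-- the logarithmic form Ω = (x dy − y dx)/(x⁴+y⁴), with components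
Ωx = −y/(x⁴+y⁴), Ωy = x/(x⁴+y⁴): Ω and dΩ have simple poles along x⁴+y⁴ = 0
(here x⁴+y⁴ is squarefree, and dΩ = (∂x Ωy − ∂y Ωx) dx∧dy satisfies
(x⁴+y⁴)·(∂x Ωy − ∂y Ωx) = −2), while the pullback by the blow-up chart σ(x,t)=(x,tx)
is σ*Ω = dt/(x²(1+t⁴)): its dx-coefficient Ωx∘σ + t·Ωy∘σ vanishes, its dt-coefficient
x·Ωy∘σ equals 1/(x²(1+t⁴)), and x²·(x·Ωy∘σ) = 1/(1+t⁴) ≠ 0, so the pole along the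
exceptional divisor x = 0 has order exactly 2. -/
theorem stmt_3 :
    let Ωx : ℂ → ℂ → ℂ := fun x y => -y / (x ^ 4 + y ^ 4)
    let Ωy : ℂ → ℂ → ℂ := fun x y => x / (x ^ 4 + y ^ 4)
    Squarefree (MvPolynomial.X 0 ^ 4 + MvPolynomial.X 1 ^ 4 : MvPolynomial (Fin 2) ℂ) ∧
    (∀ x y : ℂ, x ^ 4 + y ^ 4 ≠ 0 →
      (x ^ 4 + y ^ 4) * Ωx x y = -y ∧ (x ^ 4 + y ^ 4) * Ωy x y = x) ∧
    (∀ x y : ℂ, x ^ 4 + y ^ 4 ≠ 0 →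
      (x ^ 4 + y ^ 4) *
        (fderiv ℂ (fun p : ℂ × ℂ => Ωy p.1 p.2) (x, y) (1, 0)
          - fderiv ℂ (fun p : ℂ × ℂ => Ωx p.1 p.2) (x, y) (0, 1)) = -2) ∧
    (∀ x t : ℂ, x ≠ 0 → 1 + t ^ 4 ≠ 0 →
      Ωx x (t * x) + t * Ωy x (t * x) = 0 ∧
      x * Ωy x (t * x) = 1 / (x ^ 2 * (1 + t ^ 4)) ∧
      x ^ 2 * (x * Ωy x (t * x)) = 1 / (1 + t ^ 4) ∧
      (1 : ℂ) / (1 + t ^ 4) ≠ 0) := by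
  intro Ωx Ωy
  refine ⟨sq_aux, ?_, ?_, ?_⟩
  · intro x y h
    constructor
    · simp only [Ωx]; field_simp; try ring
    · simp only [Ωy]; field_simp; try ring
  · intro x y h
    have hdiff : DifferentiableAt ℂ (fun p : ℂ × ℂ => p.1 ^ 4 + p.2 ^ 4) (x, y) := by fun_prop
    have hinv : DifferentiableAt ℂ (fun p : ℂ × ℂ => (p.1 ^ 4 + p.2 ^ 4)⁻¹) (x, y) :=
      hdiff.inv h
    have hdfy : DifferentiableAt ℂ (fun p : ℂ × ℂ => p.1 / (p.1 ^ 4 + p.2 ^ 4)) (x, y) := by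
      simp only [div_eq_mul_inv]
      exact differentiableAt_fst.mul hinv
    have hdfx : DifferentiableAt ℂ (fun p : ℂ × ℂ => -p.2 / (p.1 ^ 4 + p.2 ^ 4)) (x, y) := by
      simp only [div_eq_mul_inv]
      exact differentiableAt_snd.neg.mul hinv
    have e1 : fderiv ℂ (fun p : ℂ × ℂ => Ωy p.1 p.2) (x, y) (1, 0) =
        ((1 : ℂ) * (x ^ 4 + y ^ 4) - x * ((4 : ℕ) * x ^ 3)) / (x ^ 4 + y ^ 4) ^ 2 := by
      simp only [Ωy]
      have h1 := hdfy.hasFDerivAt.comp_hasDerivAt x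
        ((hasDerivAt_id x).prodMk (hasDerivAt_const x y))
      have h2 : HasDerivAt (fun s : ℂ => s / (s ^ 4 + y ^ 4))
          (((1 : ℂ) * (x ^ 4 + y ^ 4) - x * ((4 : ℕ) * x ^ 3)) / (x ^ 4 + y ^ 4) ^ 2) x := by
        have := (hasDerivAt_id' x).div ((hasDerivAt_pow 4 x).add_const (y ^ 4)) h
        simpa [Pi.div_def] using this
      exact (h2.unique h1).symm
    have e2 : fderiv ℂ (fun p : ℂ × ℂ => Ωx p.1 p.2) (x, y) (0, 1) =
        ((-1 : ℂ) * (x ^ 4 + y ^ 4) - -y * ((4 : ℕ) * y ^ 3)) / (x ^ 4 + y ^ 4) ^ 2 := by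
      simp only [Ωx]
      have h1 := hdfx.hasFDerivAt.comp_hasDerivAt y
        ((hasDerivAt_const y x).prodMk (hasDerivAt_id y))
      have h2 : HasDerivAt (fun s : ℂ => -s / (x ^ 4 + s ^ 4))
          (((-1 : ℂ) * (x ^ 4 + y ^ 4) - -y * ((4 : ℕ) * y ^ 3)) / (x ^ 4 + y ^ 4) ^ 2) y := by
        have := ((hasDerivAt_id' y).neg).div ((hasDerivAt_pow 4 y).const_add (x ^ 4)) h
        simpa [add_comm, Pi.div_def, Pi.neg_def] using this
      exact (h2.unique h1).symm
    rw [e1, e2]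
    push_cast
    field_simp
    ring
  · intro x t hx ht
    have hd : x ^ 4 + (t * x) ^ 4 ≠ 0 := by
      have hEq : x ^ 4 + (t * x) ^ 4 = x ^ 4 * (1 + t ^ 4) := by ring
      rw [hEq]
      exact mul_ne_zero (pow_ne_zero _ hx) ht
    refine ⟨?_, ?_, ?_, ?_⟩
    · simp only [Ωx, Ωy]; field_simp; try ring
    · simp only [Ωy]; field_simp; try ring
    · simp only [Ωy]; field_simp; try ring
    · exact one_div_ne_zero ht
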